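/- The regularized maximum is smooth: for every p ≥ 1 and every η = (η_1,…,η_p) with all η_j > 0, the function M_η : ℝ^p → ℝ is infinitely differentiable (C^∞) on ℝ^p. -/

import Mathlib

open MeasureTheory
open scoped Convolution

/-- **Smoothness of the regularized maximum.**
For every `p ≥ 1` and every `η = (η₁, …, η_p)` with all `η_j > 0`, the regularized
maximum `M_η : ℝ^p → ℝ`, defined by
`M_η(t) = ∫_{ℝ^p} max_j (t_j + h_j) ∏_j η_j⁻¹ ρ(h_j / η_j) dh`,
is infinitely differentiable on `ℝ^p`. -/
theorem regularized_max_smooth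
    (ρ : ℝ → ℝ)
    (hρ_smooth : ContDiff ℝ (⊤ : ℕ∞) ρ)
    (hρ_nonneg : ∀ x, 0 ≤ ρ x)
    (hρ_supp : Function.support ρ ⊆ Set.Icc (-1 : ℝ) 1)
    (hρ_int : ∫ x : ℝ, ρ x = 1)
    (hρ_mean : ∫ x : ℝ, x * ρ x = 0)
    (p : ℕ) (hp : 1 ≤ p)
    (η : Fin p → ℝ) (hη : ∀ j, 0 < η j)
    (M : (Fin p → ℝ) → ℝ)
    (hM : ∀ t : Fin p → ℝ,
      M t = ∫ h : Fin p → ℝ,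
        (⨆ j, (t j + h j)) * ∏ j, (η j)⁻¹ * ρ (h j / η j)) :
    ContDiff ℝ (⊤ : ℕ∞) M := by
  have hp' : Nonempty (Fin p) := Fin.pos_iff_nonempty.mp hp
  set φ : (Fin p → ℝ) → ℝ := fun h => ∏ j, (η j)⁻¹ * ρ (h j / η j) with hφdef
  set ψ : (Fin p → ℝ) → ℝ := fun x => φ (-x) with hψdef
  set f : (Fin p → ℝ) → ℝ := fun u => ⨆ j, u j with hfdef
  -- smoothness of the kernel
  have hφ_smooth : ContDiff ℝ (⊤ : ℕ∞) φ := by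
    apply contDiff_prod (t := Finset.univ)
      (f := fun j (h : Fin p → ℝ) => (η j)⁻¹ * ρ (h j / η j))
    intro j _
    exact contDiff_const.mul
      (hρ_smooth.comp ((contDiff_apply ℝ ℝ j).div_const (η j)))
  have hψ_smooth : ContDiff ℝ (⊤ : ℕ∞) ψ := hφ_smooth.comp contDiff_neg
  -- compact support of the kernel
  have hψ_supp : HasCompactSupport ψ := by
    apply HasCompactSupport.intro (isCompact_Icc (a := fun j => -(η j)) (b := η))
    intro x hx
    simp only [Set.mem_Icc, Pi.le_def, not_and_or, not_forall, not_le] at hx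
    have : ∃ j, ρ (-x j / η j) = 0 := by
      rcases hx with ⟨j, hj⟩ | ⟨j, hj⟩
      · refine ⟨j, Function.notMem_support.mp fun hmem => ?_⟩
        have := (hρ_supp hmem).2
        rw [div_le_one (hη j)] at this
        linarith
      · refine ⟨j, Function.notMem_support.mp fun hmem => ?_⟩
        have := (hρ_supp hmem).1
        rw [le_div_iff₀ (hη j)] at this
        linarith
    rcases this with ⟨j, hj⟩
    show φ (-x) = 0
    rw [hφdef]
    exact Finset.prod_eq_zero (Finset.mem_univ j) (by simp [hj])
  -- continuity / local integrability of the max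
  have hf_cont : Continuous f := by
    have : f = fun u : Fin p → ℝ =>
        Finset.univ.sup' Finset.univ_nonempty (fun j => u j) := by
      funext u
      exact (Finset.sup'_univ_eq_ciSup _).symm
    rw [this]
    exact Continuous.finset_sup'_apply Finset.univ_nonempty
      (fun j _ => continuous_apply j)
  have hf_loc : LocallyIntegrable f (volume : Measure (Fin p → ℝ)) :=
    hf_cont.locallyIntegrable
  -- identify M with a convolution
  have key : M = f ⋆[ContinuousLinearMap.lsmul ℝ ℝ, volume] ψ := by
    funext x
    rw [hM x, convolution_def]
    simp only [ContinuousLinearMap.lsmul_apply, smul_eq_mul, hψdef, neg_sub]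
    rw [← integral_sub_right_eq_self
      (fun h : Fin p → ℝ => (⨆ j, x j + h j) * φ h) x]
    refine integral_congr_ae (Filter.Eventually.of_forall fun u => ?_)
    simp only [Pi.sub_apply, hfdef]
    congr 1
    congr 1
    funext j
    ring
  rw [key]
  exact hψ_supp.contDiff_convolution_right (ContinuousLinearMap.lsmul ℝ ℝ)
    hf_loc hψ_smooth
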